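/- Suppose that at some receiver j0 ∈ J and time t ∈ ℝ, at least n0 − f0 senders i ∈ V0 satisfy R_{i,j0} ∩ [t − w', t] ≠ ∅, for some w' ≥ 0. Then there exists a set P ⊆ V0 \ F of nonfaulty senders with |P| ≥ n0 − 2f0 such that, setting t0' = t − w' − δd, for every receiver j ∈ J there exists a time t_j ∈ [t0', t0' + w' + 2δd] with R_{i,j} ∩ [t_j − (w' + 2δd), t_j] ≠ ∅ for every i ∈ P. In particular, the detection condition with window w' + 2δd and threshold n0 − 2f0 holds at every receiver at some time in [t − w' − δd, t + δd]. -/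
import Mathlib


/-- First half of the proof of the paper's Lemma 4: a pulsing clique observed by one
nonfaulty node with threshold `n0 - f0` (window `w'`) is observed, with threshold
`n0 - 2*f0` and window `w' + 2*δd`, by every receiver within a narrow common window. -/
theorem stmt_3 {J : Type*} [Nonempty J]
    (n0 f0 : ℕ) (ε δd w : ℝ) (hε : 0 ≤ ε) (hδd : 0 ≤ δd) (hw : 0 ≤ w)
    (hn : n0 > 5 * f0)
    (F : Finset (Fin n0)) (hF : F.card ≤ f0)
    (p : Fin n0 → ℕ → ℝ)
    (hmono : ∀ i ∉ F, StrictMono (p i))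
    (hsep : ∀ i ∉ F, ∀ k : ℕ, ε ≤ p i (k + 1) - p i k)
    (R : Fin n0 → J → Set ℝ)
    (hsound : ∀ i ∉ F, ∀ j : J, ∀ r ∈ R i j,
      ∃ k : ℕ, r ∈ Set.Icc (p i k) (p i k + δd))
    (hcomplete : ∀ i ∉ F, ∀ k : ℕ, ∀ j : J,
      (R i j ∩ Set.Icc (p i k) (p i k + δd)).Nonempty)
    (j0 : J) (t w' : ℝ) (hw' : 0 ≤ w')
    (hobs : ∃ D : Finset (Fin n0), n0 - f0 ≤ D.card ∧
      ∀ i ∈ D, (R i j0 ∩ Set.Icc (t - w') t).Nonempty) :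
    ∃ P : Finset (Fin n0), (∀ i ∈ P, i ∉ F) ∧ n0 - 2 * f0 ≤ P.card ∧
      ∀ j : J, ∃ tj ∈ Set.Icc (t - w' - δd) (t - w' - δd + (w' + 2 * δd)),
        ∀ i ∈ P, (R i j ∩ Set.Icc (tj - (w' + 2 * δd)) tj).Nonempty := by
  obtain ⟨D, hD, hDobs⟩ := hobs
  refine ⟨D \ F, fun i hi => (Finset.mem_sdiff.mp hi).2, ?_, ?_⟩
  · have h1 : D.card ≤ (D \ F).card + F.card := Finset.card_le_card_sdiff_add_card
    omega
  · intro j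
    refine ⟨t + δd, ⟨by linarith, by linarith⟩, ?_⟩
    intro i hi
    obtain ⟨hiD, hiF⟩ := Finset.mem_sdiff.mp hi
    obtain ⟨r, hrR, hr1, hr2⟩ := hDobs i hiD
    obtain ⟨k, hk1, hk2⟩ := hsound i hiF j0 r hrR
    obtain ⟨s, hsR, hs1, hs2⟩ := hcomplete i hiF k j
    exact ⟨s, hsR, by constructor <;> [linarith; linarith]⟩
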